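/- Let T be an invertible measure-preserving transformation of a probability space, M an invariant σ-algebra (M ⊂ T^{-1}M), and f ∈ L¹ with E(f | M_{-∞}) = 0 and f measurable with respect to M_∞, where M_{-∞} = ∩_i T^{-i}M and M_∞ = σ(∪_i T^{-i}M). Suppose the series Σ_{k≥0} E(f∘T^k | M) and Σ_{k≥0} [f∘T^{-k} − E(f∘T^{-k} | M)] converge in L¹. Then there exist m, g ∈ L¹ such that f = m + g − g∘T and (m∘T^i) is a martingale difference sequence adapted to (T^{-i}M), i.e. m is T^{-1}M-measurable and E(m | M) = 0. -/

import Mathlib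

open MeasureTheory Filter Finset
open scoped ENNReal Topology

/-- The `i`-th iterate (`i ∈ ℤ`) of an invertible map `T` with inverse `T'`. -/
def zIter {Ω : Type*} (T T' : Ω → Ω) (i : ℤ) : Ω → Ω :=
  if 0 ≤ i then T^[i.toNat] else T'^[(-i).toNat]

section Aux

variable {Ω : Type*} {m0 : MeasurableSpace Ω} {μ : Measure Ω} [IsProbabilityMeasure μ]

omit [IsProbabilityMeasure μ] in
/-- Uniqueness of `L¹` limits (a.e.). -/
lemma l1_tendsto_unique {u : ℕ → Ω → ℝ} {a b : Ω → ℝ}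
    (hu : ∀ N, AEStronglyMeasurable (u N) μ)
    (ha : AEStronglyMeasurable a μ) (hb : AEStronglyMeasurable b μ)
    (h1 : Tendsto (fun N => eLpNorm (u N - a) 1 μ) atTop (𝓝 0))
    (h2 : Tendsto (fun N => eLpNorm (u N - b) 1 μ) atTop (𝓝 0)) :
    a =ᵐ[μ] b := by
  have hsum : Tendsto (fun N => eLpNorm (u N - a) 1 μ + eLpNorm (u N - b) 1 μ)
      atTop (𝓝 0) := by
    have := h1.add h2
    simpa using this
  have hab : eLpNorm (a - b) 1 μ = 0 := by
    refine le_antisymm (ge_of_tendsto' hsum fun N => ?_) (zero_le)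
    have hrw : a - b = (a - u N) + (u N - b) := by ring
    calc eLpNorm (a - b) 1 μ ≤ eLpNorm (a - u N) 1 μ + eLpNorm (u N - b) 1 μ := by
          rw [hrw]
          exact eLpNorm_add_le (ha.sub (hu N)) ((hu N).sub hb) le_rfl
      _ = eLpNorm (u N - a) 1 μ + eLpNorm (u N - b) 1 μ := by
          rw [eLpNorm_sub_comm]
  have h0 := (eLpNorm_eq_zero_iff (ha.sub hb) one_ne_zero).mp hab
  filter_upwards [h0] with ω hω
  have : a ω - b ω = 0 := hω
  linarith

omit [IsProbabilityMeasure μ] in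
/-- `L¹` continuity of conditional expectation. -/
lemma l1_tendsto_condexp (M' : MeasurableSpace Ω) {u : ℕ → Ω → ℝ} {a : Ω → ℝ}
    (hu : ∀ N, Integrable (u N) μ) (ha : Integrable a μ)
    (h : Tendsto (fun N => eLpNorm (u N - a) 1 μ) atTop (𝓝 0)) :
    Tendsto (fun N => eLpNorm (μ[u N|M'] - μ[a|M']) 1 μ) atTop (𝓝 0) := by
  refine tendsto_of_tendsto_of_tendsto_of_le_of_le tendsto_const_nhds h
    (fun N => zero_le) (fun N => ?_)
  calc eLpNorm (μ[u N|M'] - μ[a|M']) 1 μ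
      = eLpNorm (μ[u N - a|M']) 1 μ := eLpNorm_congr_ae (condExp_sub (hu N) ha M').symm
    _ ≤ eLpNorm (u N - a) 1 μ := eLpNorm_one_condExp_le_eLpNorm _

/-- Commutation of conditional expectation with an invertible measure-preserving map:
`E(h|M) ∘ T = E(h∘T | T⁻¹M)`. -/
lemma condexp_comp_aux {T T' : Ω → Ω} (hT : MeasurePreserving T μ μ)
    (hT' : MeasurePreserving T' μ μ) (hinv₁ : Function.LeftInverse T' T)
    (hinv₂ : Function.RightInverse T' T) {M : MeasurableSpace Ω} (hM : M ≤ m0)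
    {h : Ω → ℝ} (hh : Integrable h μ) :
    (fun ω => (μ[h|M]) (T ω)) =ᵐ[μ] μ[h ∘ T | MeasurableSpace.comap T M] := by
  letI : MeasurableSpace Ω := m0
  have hTm : @Measurable Ω Ω (MeasurableSpace.comap T M) M T := fun s hs => ⟨s, hs, rfl⟩
  have hmle : MeasurableSpace.comap T M ≤ m0 := by
    intro s hs
    obtain ⟨s', hs', rfl⟩ := hs
    exact hT.measurable (hM _ hs')
  have hemb : @MeasurableEmbedding Ω Ω m0 m0 T :=
    MeasurableEquiv.measurableEmbedding
      (⟨⟨T, T', hinv₁, hinv₂⟩, hT.measurable, hT'.measurable⟩ : @MeasurableEquiv Ω Ω m0 m0)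
  refine ae_eq_condExp_of_forall_setIntegral_eq hmle
    ((hT.integrable_comp hh.aestronglyMeasurable).mpr hh)
    (fun s _ _ =>
      ((hT.integrable_comp integrable_condExp.aestronglyMeasurable).mpr
        integrable_condExp).integrableOn) ?_ ?_
  · rintro s ⟨s', hs', rfl⟩ _
    rw [hT.setIntegral_preimage_emb hemb, setIntegral_condExp hM hh hs']
    exact (hT.setIntegral_preimage_emb hemb h s').symm
  · exact (stronglyMeasurable_condExp.comp_measurable hTm).aestronglyMeasurable

/-- Tower version: `E(E(h|M)∘T | M) = E(h∘T|M)`. -/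
lemma condexp_condexp_comp {T T' : Ω → Ω} (hT : MeasurePreserving T μ μ)
    (hT' : MeasurePreserving T' μ μ) (hinv₁ : Function.LeftInverse T' T)
    (hinv₂ : Function.RightInverse T' T) {M : MeasurableSpace Ω} (hM : M ≤ m0)
    (hMinv : M ≤ MeasurableSpace.comap T M)
    {h : Ω → ℝ} (hh : Integrable h μ) :
    μ[(fun ω => (μ[h|M]) (T ω)) | M] =ᵐ[μ] μ[h ∘ T | M] := by
  letI : MeasurableSpace Ω := m0
  have hmle : MeasurableSpace.comap T M ≤ m0 := by
    intro s hs
    obtain ⟨s', hs', rfl⟩ := hs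
    exact hT.measurable (hM _ hs')
  exact (condExp_congr_ae (condexp_comp_aux hT hT' hinv₁ hinv₂ hM hh)).trans
    (condExp_condExp_of_le hMinv hmle)

end Aux

/-- Corollary 2, sufficiency: if `Σ_{k≥0} E(f∘T^k|M)` and
`Σ_{k≥0}[f∘T^{-k} - E(f∘T^{-k}|M)]` converge in `L¹` (with `f ∈ L¹`,
`E(f|M_{-∞}) = 0`, `f` being `M_∞`-measurable), then `f = m + g - g∘T` with
`m, g ∈ L¹`, `m` being `T⁻¹M`-measurable and `E(m|M) = 0`, i.e. `(m∘T^i)` is a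
martingale difference sequence for the filtration `(T^{-i}M)`. -/
theorem stationary_martingale_coboundary_sufficiency
    {Ω : Type*} {m0 : MeasurableSpace Ω} {μ : Measure Ω} [IsProbabilityMeasure μ]
    (T T' : Ω → Ω) (hT : MeasurePreserving T μ μ) (hT' : MeasurePreserving T' μ μ)
    (hinv₁ : Function.LeftInverse T' T) (hinv₂ : Function.RightInverse T' T)
    (M : MeasurableSpace Ω) (hM : M ≤ m0)
    (hMinv : M ≤ MeasurableSpace.comap T M)
    (f : Ω → ℝ) (hf : Integrable f μ)
    (hfmeas : AEStronglyMeasurable[⨆ i : ℤ, MeasurableSpace.comap (zIter T T' i) M] f μ)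
    (hftail : μ[f | ⨅ i : ℤ, MeasurableSpace.comap (zIter T T' i) M] =ᵐ[μ] 0)
    (hser1 : ∃ V : Ω → ℝ, Integrable V μ ∧
      Tendsto (fun N : ℕ =>
        eLpNorm (fun ω => (∑ k ∈ Finset.range N, (μ[f ∘ T^[k] | M]) ω) - V ω) 1 μ)
        atTop (𝓝 0))
    (hser2 : ∃ W : Ω → ℝ, Integrable W μ ∧
      Tendsto (fun N : ℕ =>
        eLpNorm (fun ω =>
          (∑ k ∈ Finset.range N, (f (T'^[k] ω) - (μ[f ∘ T'^[k] | M]) ω)) - W ω) 1 μ)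
        atTop (𝓝 0)) :
    ∃ m g : Ω → ℝ, Integrable m μ ∧ Integrable g μ ∧
      (f =ᵐ[μ] fun ω => m ω + g ω - g (T ω)) ∧
      AEStronglyMeasurable[MeasurableSpace.comap T M] m μ ∧
      μ[m | M] =ᵐ[μ] 0 := by
  letI : MeasurableSpace Ω := m0
  classical
  obtain ⟨V, hVint, hV⟩ := hser1
  obtain ⟨W, hWint, hW⟩ := hser2
  have hcomp : ∀ {h : Ω → ℝ}, Integrable h μ → Integrable (fun ω => h (T ω)) μ :=
    fun {h} hh => (hT.integrable_comp hh.aestronglyMeasurable).mpr hh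
  have hTm : @Measurable Ω Ω (MeasurableSpace.comap T M) M T := fun s hs => ⟨s, hs, rfl⟩
  have hmle : MeasurableSpace.comap T M ≤ m0 := by
    intro s hs
    obtain ⟨s', hs', rfl⟩ := hs
    exact hT.measurable (hM _ hs')
  have hfTk : ∀ k : ℕ, Integrable (f ∘ T^[k]) μ :=
    fun k => ((hT.iterate k).integrable_comp hf.aestronglyMeasurable).mpr hf
  have hfT'k : ∀ k : ℕ, Integrable (f ∘ T'^[k]) μ :=
    fun k => ((hT'.iterate k).integrable_comp hf.aestronglyMeasurable).mpr hf
  have hiter : ∀ (k : ℕ) (x : Ω), T'^[k+1] (T x) = T'^[k] x := by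
    intro k x
    rw [Function.iterate_succ_apply, hinv₁ x]
  have hcond0T : μ[f ∘ T^[0]|M] = μ[f|M] := by
    rw [Function.iterate_zero, Function.comp_id]
  have hcond0T' : μ[f ∘ T'^[0]|M] = μ[f|M] := by
    rw [Function.iterate_zero, Function.comp_id]
  -- integrability of the partial sums
  have hSint : ∀ N : ℕ, Integrable (fun ω => ∑ k ∈ Finset.range N, (μ[f ∘ T^[k]|M]) ω) μ :=
    fun N => integrable_finset_sum _ fun k _ => integrable_condExp
  have hS'int : ∀ N : ℕ, Integrable (fun ω => ∑ k ∈ Finset.range N, (μ[f ∘ T'^[k]|M]) ω) μ :=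
    fun N => integrable_finset_sum _ fun k _ => integrable_condExp
  have hS''int : ∀ N : ℕ, Integrable (fun ω => ∑ k ∈ Finset.range N, (μ[f ∘ T'^[k+1]|M]) ω) μ :=
    fun N => integrable_finset_sum _ fun k _ => integrable_condExp
  have hRint : ∀ N : ℕ, Integrable
      (fun ω => ∑ k ∈ Finset.range N, (f (T'^[k] ω) - (μ[f ∘ T'^[k]|M]) ω)) μ :=
    fun N => integrable_finset_sum _ fun k _ => (hfT'k k).sub integrable_condExp
  -- the coboundary and the martingale difference
  set g : Ω → ℝ := fun ω => V ω - (μ[f|M]) ω - W ω + f ω with hgdef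
  set m : Ω → ℝ := fun ω => f ω + g (T ω) - g ω with hmdef
  have hgint : Integrable g μ := ((hVint.sub integrable_condExp).sub hWint).add hf
  have hmint : Integrable m μ := (hf.add (hcomp hgint)).sub hgint
  -- the approximating sequence
  set MM : ℕ → Ω → ℝ := fun N ω =>
    ((∑ k ∈ Finset.range N, (μ[f ∘ T^[k]|M]) (T ω)) -
      ∑ k ∈ Finset.range N, (μ[f ∘ T^[k]|M]) ω)
    + (μ[f|M]) ω
    + ((∑ k ∈ Finset.range N, (μ[f ∘ T'^[k+1]|M]) (T ω)) -
      ∑ k ∈ Finset.range N, (μ[f ∘ T'^[k]|M]) ω) with hMMdef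
  have hMMint : ∀ N, Integrable (MM N) μ := by
    intro N
    simp only [hMMdef]
    exact (((hcomp (hSint N)).sub (hSint N)).add integrable_condExp).add
      ((hcomp (hS''int N)).sub (hS'int N))
  -- key algebraic identity
  have hkey : ∀ N : ℕ, MM N - m =
      ((fun ω => (∑ k ∈ Finset.range N, (μ[f ∘ T^[k]|M]) (T ω)) - V (T ω)) -
       (fun ω => (∑ k ∈ Finset.range N, (μ[f ∘ T^[k]|M]) ω) - V ω)) +
      ((fun ω => (∑ k ∈ Finset.range N, (f (T'^[k] ω) - (μ[f ∘ T'^[k]|M]) ω)) - W ω) -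
       (fun ω => (∑ k ∈ Finset.range (N+1),
          (f (T'^[k] (T ω)) - (μ[f ∘ T'^[k]|M]) (T ω))) - W (T ω))) := by
    intro N
    funext ω
    simp only [Pi.add_apply, Pi.sub_apply, hMMdef, hmdef, hgdef]
    rw [Finset.sum_range_succ' (fun k => f (T'^[k] (T ω)) - (μ[f ∘ T'^[k]|M]) (T ω)) N]
    simp only [hiter, Function.iterate_zero_apply, hcond0T', Finset.sum_sub_distrib]
    ring
  -- L¹ convergence MM N → m
  have t1 : Tendsto (fun N => eLpNorm
      (fun ω => (∑ k ∈ Finset.range N, (μ[f ∘ T^[k]|M]) (T ω)) - V (T ω)) 1 μ)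
      atTop (𝓝 0) := by
    have heq : ∀ N : ℕ, eLpNorm
        (fun ω => (∑ k ∈ Finset.range N, (μ[f ∘ T^[k]|M]) (T ω)) - V (T ω)) 1 μ
        = eLpNorm (fun ω => (∑ k ∈ Finset.range N, (μ[f ∘ T^[k]|M]) ω) - V ω) 1 μ :=
      fun N => eLpNorm_comp_measurePreserving
        (g := fun ω => (∑ k ∈ Finset.range N, (μ[f ∘ T^[k]|M]) ω) - V ω)
        ((hSint N).sub hVint).aestronglyMeasurable hT
    simp only [heq]
    exact hV
  have t4 : Tendsto (fun N => eLpNorm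
      (fun ω => (∑ k ∈ Finset.range (N+1),
        (f (T'^[k] (T ω)) - (μ[f ∘ T'^[k]|M]) (T ω))) - W (T ω)) 1 μ)
      atTop (𝓝 0) := by
    have heq : ∀ N : ℕ, eLpNorm
        (fun ω => (∑ k ∈ Finset.range (N+1),
          (f (T'^[k] (T ω)) - (μ[f ∘ T'^[k]|M]) (T ω))) - W (T ω)) 1 μ
        = eLpNorm (fun ω => (∑ k ∈ Finset.range (N+1),
          (f (T'^[k] ω) - (μ[f ∘ T'^[k]|M]) ω)) - W ω) 1 μ :=
      fun N => eLpNorm_comp_measurePreserving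
        (g := fun ω => (∑ k ∈ Finset.range (N+1),
          (f (T'^[k] ω) - (μ[f ∘ T'^[k]|M]) ω)) - W ω)
        ((hRint (N+1)).sub hWint).aestronglyMeasurable hT
    simp only [heq]
    exact hW.comp (tendsto_add_atTop_nat 1)
  have hMMtendsto : Tendsto (fun N => eLpNorm (MM N - m) 1 μ) atTop (𝓝 0) := by
    have hb : ∀ N : ℕ, eLpNorm (MM N - m) 1 μ ≤
        (eLpNorm (fun ω => (∑ k ∈ Finset.range N, (μ[f ∘ T^[k]|M]) (T ω)) - V (T ω)) 1 μ +
         eLpNorm (fun ω => (∑ k ∈ Finset.range N, (μ[f ∘ T^[k]|M]) ω) - V ω) 1 μ) +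
        (eLpNorm (fun ω =>
            (∑ k ∈ Finset.range N, (f (T'^[k] ω) - (μ[f ∘ T'^[k]|M]) ω)) - W ω) 1 μ +
         eLpNorm (fun ω => (∑ k ∈ Finset.range (N+1),
            (f (T'^[k] (T ω)) - (μ[f ∘ T'^[k]|M]) (T ω))) - W (T ω)) 1 μ) := by
      intro N
      rw [hkey N]
      have a1 : AEStronglyMeasurable
          (fun ω => (∑ k ∈ Finset.range N, (μ[f ∘ T^[k]|M]) (T ω)) - V (T ω)) μ :=
        ((hcomp (hSint N)).sub (hcomp hVint)).aestronglyMeasurable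
      have a2 : AEStronglyMeasurable
          (fun ω => (∑ k ∈ Finset.range N, (μ[f ∘ T^[k]|M]) ω) - V ω) μ :=
        ((hSint N).sub hVint).aestronglyMeasurable
      have a3 : AEStronglyMeasurable
          (fun ω => (∑ k ∈ Finset.range N, (f (T'^[k] ω) - (μ[f ∘ T'^[k]|M]) ω)) - W ω) μ :=
        ((hRint N).sub hWint).aestronglyMeasurable
      have a4 : AEStronglyMeasurable
          (fun ω => (∑ k ∈ Finset.range (N+1),
            (f (T'^[k] (T ω)) - (μ[f ∘ T'^[k]|M]) (T ω))) - W (T ω)) μ := by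
        have := hcomp ((hRint (N+1)).sub hWint)
        exact this.aestronglyMeasurable
      refine le_trans (eLpNorm_add_le (a1.sub a2) (a3.sub a4) le_rfl) ?_
      exact add_le_add (eLpNorm_sub_le a1 a2 le_rfl) (eLpNorm_sub_le a3 a4 le_rfl)
    have hsum : Tendsto (fun N : ℕ =>
        (eLpNorm (fun ω => (∑ k ∈ Finset.range N, (μ[f ∘ T^[k]|M]) (T ω)) - V (T ω)) 1 μ +
         eLpNorm (fun ω => (∑ k ∈ Finset.range N, (μ[f ∘ T^[k]|M]) ω) - V ω) 1 μ) +
        (eLpNorm (fun ω =>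
            (∑ k ∈ Finset.range N, (f (T'^[k] ω) - (μ[f ∘ T'^[k]|M]) ω)) - W ω) 1 μ +
         eLpNorm (fun ω => (∑ k ∈ Finset.range (N+1),
            (f (T'^[k] (T ω)) - (μ[f ∘ T'^[k]|M]) (T ω))) - W (T ω)) 1 μ))
        atTop (𝓝 0) := by
      have := (t1.add hV).add (hW.add t4)
      simpa using this
    exact tendsto_of_tendsto_of_tendsto_of_le_of_le tendsto_const_nhds hsum
      (fun N => zero_le) hb
  -- strong measurability of MM N w.r.t. comap T M
  have hMMsm : ∀ N, StronglyMeasurable[MeasurableSpace.comap T M] (MM N) := by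
    intro N
    simp only [hMMdef]
    have s1 : StronglyMeasurable[M] (fun ω => ∑ k ∈ Finset.range N, (μ[f ∘ T^[k]|M]) ω) :=
      Finset.stronglyMeasurable_fun_sum _ fun k _ => stronglyMeasurable_condExp
    have s2 : StronglyMeasurable[M] (fun ω => ∑ k ∈ Finset.range N, (μ[f ∘ T'^[k]|M]) ω) :=
      Finset.stronglyMeasurable_fun_sum _ fun k _ => stronglyMeasurable_condExp
    have s3 : StronglyMeasurable[M] (fun ω => ∑ k ∈ Finset.range N, (μ[f ∘ T'^[k+1]|M]) ω) :=
      Finset.stronglyMeasurable_fun_sum _ fun k _ => stronglyMeasurable_condExp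
    exact (((s1.comp_measurable hTm).sub (s1.mono hMinv)).add
      (stronglyMeasurable_condExp.mono hMinv)).add
      ((s3.comp_measurable hTm).sub (s2.mono hMinv))
  have hMMcond : ∀ N, μ[MM N|MeasurableSpace.comap T M] =ᵐ[μ] MM N :=
    fun N => condExp_of_aestronglyMeasurable' hmle (hMMsm N).aestronglyMeasurable (hMMint N)
  -- m is a.e. comap T M - measurable
  have hmcondTM : m =ᵐ[μ] μ[m|MeasurableSpace.comap T M] := by
    refine l1_tendsto_unique (u := MM) (fun N => (hMMint N).aestronglyMeasurable)
      hmint.aestronglyMeasurable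
      ((stronglyMeasurable_condExp.mono hmle).aestronglyMeasurable) hMMtendsto ?_
    have hh := l1_tendsto_condexp (MeasurableSpace.comap T M) hMMint hmint hMMtendsto
    refine (tendsto_congr fun N => ?_).mpr hh
    exact eLpNorm_congr_ae ((hMMcond N).symm.sub EventuallyEq.rfl)
  -- conditional expectations at M
  have c1 : ∀ k : ℕ, μ[(fun ω => (μ[f ∘ T^[k]|M]) (T ω))|M] =ᵐ[μ] μ[f ∘ T^[k+1]|M] := by
    intro k
    have h0 := condexp_condexp_comp hT hT' hinv₁ hinv₂ hM hMinv (hfTk k)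
    have hco : (f ∘ T^[k]) ∘ T = f ∘ T^[k+1] := by
      funext x
      simp [Function.iterate_succ_apply]
    rwa [hco] at h0
  have c2 : ∀ k : ℕ, μ[(fun ω => (μ[f ∘ T'^[k+1]|M]) (T ω))|M] =ᵐ[μ] μ[f ∘ T'^[k]|M] := by
    intro k
    have h0 := condexp_condexp_comp hT hT' hinv₁ hinv₂ hM hMinv (hfT'k (k+1))
    have hco : (f ∘ T'^[k+1]) ∘ T = f ∘ T'^[k] := by
      funext x
      simp only [Function.comp_apply]
      rw [Function.iterate_succ_apply, hinv₁ x]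
    rwa [hco] at h0
  have hsum1 : ∀ N : ℕ, μ[(fun ω => ∑ k ∈ Finset.range N, (μ[f ∘ T^[k]|M]) (T ω))|M] =ᵐ[μ]
      (fun ω => ∑ k ∈ Finset.range N, (μ[f ∘ T^[k+1]|M]) ω) := by
    intro N
    have hrw : (fun ω => ∑ k ∈ Finset.range N, (μ[f ∘ T^[k]|M]) (T ω))
        = ∑ k ∈ Finset.range N, (fun ω => (μ[f ∘ T^[k]|M]) (T ω)) := by
      funext ω
      simp [Finset.sum_apply]
    rw [hrw]
    refine (condExp_finsetSum (fun k _ => hcomp integrable_condExp) M).trans ?_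
    refine (eventuallyEq_sum fun k _ => c1 k).trans ?_
    apply Filter.EventuallyEq.of_eq
    funext ω
    simp [Finset.sum_apply]
  have hsum2 : ∀ N : ℕ, μ[(fun ω => ∑ k ∈ Finset.range N, (μ[f ∘ T'^[k+1]|M]) (T ω))|M] =ᵐ[μ]
      (fun ω => ∑ k ∈ Finset.range N, (μ[f ∘ T'^[k]|M]) ω) := by
    intro N
    have hrw : (fun ω => ∑ k ∈ Finset.range N, (μ[f ∘ T'^[k+1]|M]) (T ω))
        = ∑ k ∈ Finset.range N, (fun ω => (μ[f ∘ T'^[k+1]|M]) (T ω)) := by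
      funext ω
      simp [Finset.sum_apply]
    rw [hrw]
    refine (condExp_finsetSum (fun k _ => hcomp integrable_condExp) M).trans ?_
    refine (eventuallyEq_sum fun k _ => c2 k).trans ?_
    apply Filter.EventuallyEq.of_eq
    funext ω
    simp [Finset.sum_apply]
  have cond : ∀ N : ℕ, μ[MM N|M] =ᵐ[μ] μ[f ∘ T^[N]|M] := by
    intro N
    have hMM' : MM N =
        (((fun ω => ∑ k ∈ Finset.range N, (μ[f ∘ T^[k]|M]) (T ω)) -
          (fun ω => ∑ k ∈ Finset.range N, (μ[f ∘ T^[k]|M]) ω)) + μ[f|M]) +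
        ((fun ω => ∑ k ∈ Finset.range N, (μ[f ∘ T'^[k+1]|M]) (T ω)) -
          (fun ω => ∑ k ∈ Finset.range N, (μ[f ∘ T'^[k]|M]) ω)) := by
      funext ω
      simp only [Pi.add_apply, Pi.sub_apply, hMMdef]
    rw [hMM']
    have i1 : Integrable (fun ω => ∑ k ∈ Finset.range N, (μ[f ∘ T^[k]|M]) (T ω)) μ :=
      hcomp (hSint N)
    have i4 : Integrable (fun ω => ∑ k ∈ Finset.range N, (μ[f ∘ T'^[k+1]|M]) (T ω)) μ :=
      hcomp (hS''int N)
    have cX2 : μ[(fun ω => ∑ k ∈ Finset.range N, (μ[f ∘ T^[k]|M]) ω)|M] =ᵐ[μ]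
        (fun ω => ∑ k ∈ Finset.range N, (μ[f ∘ T^[k]|M]) ω) :=
      condExp_of_aestronglyMeasurable' hM
        (Finset.stronglyMeasurable_fun_sum _ fun k _ =>
          stronglyMeasurable_condExp).aestronglyMeasurable (hSint N)
    have cX5 : μ[(fun ω => ∑ k ∈ Finset.range N, (μ[f ∘ T'^[k]|M]) ω)|M] =ᵐ[μ]
        (fun ω => ∑ k ∈ Finset.range N, (μ[f ∘ T'^[k]|M]) ω) :=
      condExp_of_aestronglyMeasurable' hM
        (Finset.stronglyMeasurable_fun_sum _ fun k _ =>
          stronglyMeasurable_condExp).aestronglyMeasurable (hS'int N)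
    have cX3 : μ[μ[f|M]|M] =ᵐ[μ] μ[f|M] := condExp_condExp_of_le le_rfl hM
    have iQf : Integrable (μ[f|M]) μ := integrable_condExp (m := M) (m₀ := m0) (μ := μ) (f := f)
    have step1 := (condExp_add (m := M) ((i1.sub (hSint N)).add iQf) (i4.sub (hS'int N)))
    refine step1.trans ?_
    have step2 := ((condExp_add (m := M) (i1.sub (hSint N)) iQf).trans
      (((condExp_sub (m := M) i1 (hSint N)).trans ((hsum1 N).sub cX2)).add cX3)).add
      ((condExp_sub (m := M) i4 (hS'int N)).trans ((hsum2 N).sub cX5))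
    refine step2.trans ?_
    apply Filter.EventuallyEq.of_eq
    funext ω
    have tele : (∑ k ∈ Finset.range N, (μ[f ∘ T^[k+1]|M]) ω) -
        (∑ k ∈ Finset.range N, (μ[f ∘ T^[k]|M]) ω) =
        (μ[f ∘ T^[N]|M]) ω - (μ[f ∘ T^[0]|M]) ω := by
      rw [← Finset.sum_sub_distrib]
      exact Finset.sum_range_sub (fun k => (μ[f ∘ T^[k]|M]) ω) N
    simp only [Pi.add_apply, Pi.sub_apply]
    rw [tele, hcond0T]
    ring
  -- E(f∘T^N | M) → 0 in L¹
  have hQfNtendsto : Tendsto (fun N : ℕ =>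
      eLpNorm ((μ[f ∘ T^[N]|M]) - (0 : Ω → ℝ)) 1 μ) atTop (𝓝 0) := by
    have hb : ∀ N : ℕ, eLpNorm ((μ[f ∘ T^[N]|M]) - (0 : Ω → ℝ)) 1 μ ≤
        eLpNorm (fun ω => (∑ k ∈ Finset.range (N+1), (μ[f ∘ T^[k]|M]) ω) - V ω) 1 μ +
        eLpNorm (fun ω => (∑ k ∈ Finset.range N, (μ[f ∘ T^[k]|M]) ω) - V ω) 1 μ := by
      intro N
      have hre : (μ[f ∘ T^[N]|M]) - (0 : Ω → ℝ) =
          (fun ω => (∑ k ∈ Finset.range (N+1), (μ[f ∘ T^[k]|M]) ω) - V ω) -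
          (fun ω => (∑ k ∈ Finset.range N, (μ[f ∘ T^[k]|M]) ω) - V ω) := by
        funext ω
        simp only [Pi.sub_apply, Pi.zero_apply, Finset.sum_range_succ]
        ring
      rw [hre]
      exact eLpNorm_sub_le ((hSint (N+1)).sub hVint).aestronglyMeasurable
        ((hSint N).sub hVint).aestronglyMeasurable le_rfl
    have hsum : Tendsto (fun N : ℕ =>
        eLpNorm (fun ω => (∑ k ∈ Finset.range (N+1), (μ[f ∘ T^[k]|M]) ω) - V ω) 1 μ +
        eLpNorm (fun ω => (∑ k ∈ Finset.range N, (μ[f ∘ T^[k]|M]) ω) - V ω) 1 μ)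
        atTop (𝓝 0) := by
      have := (hV.comp (tendsto_add_atTop_nat 1)).add hV
      simpa using this
    exact tendsto_of_tendsto_of_tendsto_of_le_of_le tendsto_const_nhds hsum
      (fun N => zero_le) hb
  -- conclusion
  refine ⟨m, g, hmint, hgint, ?_, ?_, ?_⟩
  · filter_upwards with ω
    simp only [hmdef]
    ring
  · exact AEStronglyMeasurable.congr
      (StronglyMeasurable.aestronglyMeasurable stronglyMeasurable_condExp) hmcondTM.symm
  · refine l1_tendsto_unique (u := fun N => μ[MM N|M])
      (fun N => integrable_condExp.aestronglyMeasurable)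
      integrable_condExp.aestronglyMeasurable aestronglyMeasurable_const ?_ ?_
    · exact l1_tendsto_condexp M hMMint hmint hMMtendsto
    · refine (tendsto_congr fun N => ?_).mpr hQfNtendsto
      exact eLpNorm_congr_ae ((cond N).sub EventuallyEq.rfl)
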